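/- arXiv:0902.3175 — 2 statements merged into one kernel-verified Lean document; each statement's English description precedes it below -/
import Mathlib

section
/- The number of subgroups of a finite group G is at most 2^((log₂|G|)²). -/
open Subgroup

lemma gen_aux {G : Type*} [Group G] [Fintype G] (n : ℕ) :
    ∀ (H : Subgroup G), Nat.card H ≤ n →
      ∃ S : Finset G, Subgroup.closure (S : Set G) = H ∧ 2 ^ S.card ≤ Nat.card H := by
  classical
  induction n with
  | zero =>
    intro H h
    have : 0 < Nat.card H := Nat.card_pos
    omega
  | succ n ih =>
    intro H hH
    by_cases hbot : H = ⊥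
    · refine ⟨∅, by simp [hbot], ?_⟩
      have : 0 < Nat.card H := Nat.card_pos
      simp only [Finset.card_empty, pow_zero]
      omega
    · -- pick a maximal proper subgroup of H
      have hne : (⊥ : Subgroup G) ∈ {K : Subgroup G | K < H} := bot_lt_iff_ne_bot.mpr hbot
      obtain ⟨K, hKs, hKmax⟩ := Set.Finite.exists_maximalFor id _ (Set.toFinite _) ⟨⊥, hne⟩
      simp only [id_eq] at hKmax
      have hKH : K < H := hKs
      obtain ⟨x, hxH, hxK⟩ := SetLike.exists_of_lt hKH
      have hdvd : Nat.card K ∣ Nat.card H := Subgroup.card_dvd_of_le hKH.le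
      have hlt : Nat.card K < Nat.card H := by
        rcases lt_or_eq_of_le (Nat.card_le_card_of_injective _
          (Subgroup.inclusion_injective hKH.le)) with h | h
        · exact h
        · exact absurd (Subgroup.eq_of_le_of_card_ge hKH.le h.ge) hKH.ne
      obtain ⟨S, hScl, hScard⟩ := ih K (by omega)
      refine ⟨insert x S, ?_, ?_⟩
      · have hle : Subgroup.closure ((insert x S : Finset G) : Set G) ≤ H := by
          rw [Subgroup.closure_le]
          intro g hg
          simp only [Finset.coe_insert, Set.mem_insert_iff] at hg
          rcases hg with rfl | hg
          · exact hxH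
          · exact hKH.le (hScl ▸ Subgroup.subset_closure hg)
        rcases lt_or_eq_of_le hle with h | h
        · exfalso
          have hKle : K ≤ Subgroup.closure ((insert x S : Finset G) : Set G) := by
            rw [← hScl]
            apply Subgroup.closure_mono
            simp
          have := le_antisymm hKle (hKmax h hKle)
          apply hxK
          rw [this]
          exact Subgroup.subset_closure (by simp)
        · exact h
      · calc 2 ^ (insert x S).card ≤ 2 ^ (S.card + 1) :=
              Nat.pow_le_pow_right (by norm_num) (Finset.card_insert_le x S)
          _ = 2 ^ S.card * 2 := by ring
          _ ≤ Nat.card K * 2 := by omega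
          _ ≤ Nat.card H := by
              obtain ⟨m, hm⟩ := hdvd
              have hK : 0 < Nat.card K := Nat.card_pos
              have : 2 ≤ m := by
                rcases m with _ | _ | m <;> omega
              nlinarith

lemma gen_fin {G : Type*} [Group G] [Fintype G] (k : ℕ) (S : Finset G) (hS : S.card ≤ k) :
    ∃ f : Fin k → G, Subgroup.closure (Set.range f) = Subgroup.closure (S : Set G) := by
  classical
  rcases S.eq_empty_or_nonempty with rfl | ⟨a, ha⟩
  · refine ⟨fun _ => 1, ?_⟩
    simp only [Finset.coe_empty, Subgroup.closure_empty]
    rw [Subgroup.closure_eq_bot_iff]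
    rintro g ⟨i, rfl⟩
    rfl
  · refine ⟨fun i => if h : (i : ℕ) < S.card then S.toList.get
      ⟨i, by simpa using h⟩ else a, ?_⟩
    congr 1
    ext g
    constructor
    · rintro ⟨i, rfl⟩
      dsimp only
      split
      · next h => exact Finset.mem_toList.mp (List.get_mem _ _)
      · exact ha
    · intro hg
      have : g ∈ S.toList := Finset.mem_toList.mpr hg
      obtain ⟨i, hi⟩ := List.get_of_mem this
      have hilt : (i : ℕ) < S.card := by
        have := i.isLt; simpa using this
      refine ⟨⟨i, lt_of_lt_of_le hilt hS⟩, ?_⟩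
      simp [hilt, ← hi]

/-- The number of subgroups of a finite group `G` is at most `2 ^ ((log₂ |G|)²)`. -/
theorem stmt_1 {G : Type*} [Group G] [Fintype G] :
    (Nat.card (Subgroup G) : ℝ) ≤ 2 ^ ((Real.logb 2 (Fintype.card G)) ^ 2) := by
  set N := Fintype.card G with hN
  have hNpos : 0 < N := Fintype.card_pos
  set k := Nat.log 2 N with hk
  -- each subgroup comes with a generating tuple of length k
  have hgen : ∀ H : Subgroup G, ∃ f : Fin k → G, Subgroup.closure (Set.range f) = H := by
    intro H
    obtain ⟨S, hScl, hScard⟩ := gen_aux (Nat.card H) H le_rfl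
    have hcard_le : Nat.card H ≤ N := by
      rw [hN, ← Nat.card_eq_fintype_card]
      exact Nat.card_le_card_of_injective _ Subtype.val_injective
    have hSk : S.card ≤ k := by
      rw [hk]
      exact (Nat.le_log_iff_pow_le (by norm_num) (by omega)).mpr (le_trans hScard hcard_le)
    obtain ⟨f, hf⟩ := gen_fin k S hSk
    exact ⟨f, hf.trans hScl⟩
  choose f hf using hgen
  have hinj : Function.Injective f := by
    intro H₁ H₂ h
    rw [← hf H₁, ← hf H₂, h]
  have hcard : Nat.card (Subgroup G) ≤ N ^ k := by
    calc Nat.card (Subgroup G) ≤ Nat.card (Fin k → G) :=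
          Nat.card_le_card_of_injective f hinj
      _ = N ^ k := by simp [Nat.card_eq_fintype_card, hN]
  have h1 : (Nat.card (Subgroup G) : ℝ) ≤ (N : ℝ) ^ (k : ℕ) := by
    exact_mod_cast hcard
  have hN1 : (1 : ℝ) ≤ (N : ℝ) := by exact_mod_cast hNpos
  have hNr : (N : ℝ) = 2 ^ (Real.logb 2 N) :=
    (Real.rpow_logb (by norm_num) (by norm_num) (by exact_mod_cast hNpos)).symm
  have hlogb0 : 0 ≤ Real.logb 2 N := Real.logb_nonneg (by norm_num) hN1
  have hklog : (k : ℝ) ≤ Real.logb 2 N := Real.natLog_le_logb N 2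
  calc (Nat.card (Subgroup G) : ℝ) ≤ (N : ℝ) ^ (k : ℕ) := h1
    _ = (2 : ℝ) ^ (Real.logb 2 N * k) := by
        rw [Real.rpow_mul (by norm_num), Real.rpow_logb (by norm_num) (by norm_num)
          (by exact_mod_cast hNpos), Real.rpow_natCast]
    _ ≤ (2 : ℝ) ^ ((Real.logb 2 (N : ℕ)) ^ 2) := by
        apply Real.rpow_le_rpow_of_exponent_le (by norm_num)
        rw [sq]
        exact mul_le_mul_of_nonneg_left hklog hlogb0
end

section
/- Let G be a finite group, 𝔽 a field of characteristic not dividing |G|, H ≤ K ≤ G subgroups. If for every irreducible 𝔽-representation ρ of G the H-fixed subspace I_H(ρ) equals the K-fixed subspace I_K(ρ), then H = K. -/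
open CategoryTheory

namespace Stmt13Aux

variable {F G : Type} [Field F] [Group G]

/-- Restriction of a representation to an invariant subspace. -/
noncomputable def subRep {V : Type} [AddCommGroup V] [Module F V] (ρ : Representation F G V)
    (q : Submodule F V) (hq : ∀ g x, x ∈ q → ρ g x ∈ q) : Representation F G q where
  toFun g := LinearMap.restrict (ρ g) (fun x hx => hq g x hx)
  map_one' := by ext x; simp [LinearMap.restrict_apply]
  map_mul' g g' := by ext x; simp [LinearMap.restrict_apply]

@[simp] theorem subRep_apply {V : Type} [AddCommGroup V] [Module F V] (ρ : Representation F G V)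
    (q : Submodule F V) (hq : ∀ g x, x ∈ q → ρ g x ∈ q) (g : G) (x : q) :
    ((subRep ρ q hq g x : q) : V) = ρ g (x : V) := rfl

/-- An invariant subspace as a submodule over the monoid algebra. -/
noncomputable def toMA {V : Type} [AddCommGroup V] [Module F V] (ρ : Representation F G V)
    (q : Submodule F V) (hq : ∀ g x, x ∈ q → ρ g x ∈ q) :
    Submodule (MonoidAlgebra F G) ρ.asModule where
  carrier := fun x => ρ.asModuleEquiv x ∈ q
  add_mem' := by
    intro a b ha hb
    show ρ.asModuleEquiv (a + b) ∈ q
    rw [map_add]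
    exact q.add_mem ha hb
  zero_mem' := by
    show ρ.asModuleEquiv 0 ∈ q
    rw [map_zero]; exact q.zero_mem
  smul_mem' := by
    intro a x hx
    show ρ.asModuleEquiv (a • x) ∈ q
    rw [Representation.asModuleEquiv_map_smul]
    rw [Representation.asAlgebraHom_def, MonoidAlgebra.lift_apply]
    rw [Finsupp.sum, LinearMap.coe_sum, Finset.sum_apply]
    refine q.sum_mem fun g _ => ?_
    rw [LinearMap.smul_apply]
    exact q.smul_mem _ (hq g _ hx)

theorem mem_toMA {V : Type} [AddCommGroup V] [Module F V] (ρ : Representation F G V)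
    (q : Submodule F V) (hq : ∀ g x, x ∈ q → ρ g x ∈ q) (x : ρ.asModule) :
    x ∈ toMA ρ q hq ↔ ρ.asModuleEquiv x ∈ q := Iff.rfl

/-- A monoid-algebra submodule as an invariant subspace. -/
noncomputable def ofMA {V : Type} [AddCommGroup V] [Module F V] (ρ : Representation F G V)
    (p : Submodule (MonoidAlgebra F G) ρ.asModule) : Submodule F V where
  carrier := fun x => ρ.asModuleEquiv.symm x ∈ p
  add_mem' := by
    intro a b ha hb
    show ρ.asModuleEquiv.symm (a + b) ∈ p
    rw [map_add]
    exact p.add_mem ha hb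
  zero_mem' := by
    show ρ.asModuleEquiv.symm 0 ∈ p
    rw [map_zero]; exact p.zero_mem
  smul_mem' := by
    intro r x hx
    show ρ.asModuleEquiv.symm (r • x) ∈ p
    rw [Representation.asModuleEquiv_symm_map_smul]
    exact p.smul_mem _ hx

theorem mem_ofMA {V : Type} [AddCommGroup V] [Module F V] (ρ : Representation F G V)
    (p : Submodule (MonoidAlgebra F G) ρ.asModule) (x : V) :
    x ∈ ofMA ρ p ↔ ρ.asModuleEquiv.symm x ∈ p := Iff.rfl

theorem ofMA_inv {V : Type} [AddCommGroup V] [Module F V] (ρ : Representation F G V)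
    (p : Submodule (MonoidAlgebra F G) ρ.asModule) :
    ∀ g x, x ∈ ofMA ρ p → ρ g x ∈ ofMA ρ p := by
  intro g x hx
  rw [mem_ofMA] at hx ⊢
  rw [Representation.asModuleEquiv_symm_map_rho]
  exact p.smul_mem _ hx



theorem simple_of_subreps {V : Type} [AddCommGroup V] [Module F V] [FiniteDimensional F V]
    [Nontrivial V] (ρ : Representation F G V)
    (hs : ∀ q : Submodule F V, (∀ g x, x ∈ q → ρ g x ∈ q) → q = ⊥ ∨ q = ⊤) :
    Simple (FDRep.of ρ) := by
  constructor
  intro Y f hm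
  constructor
  · intro hiso h0
    obtain ⟨x, y, hxy⟩ := exists_pair_ne V
    have h1 : 𝟙 (FDRep.of ρ) = 0 := by
      have h4 := IsIso.inv_hom_id f
      nth_rewrite 2 [h0] at h4
      rw [Limits.comp_zero] at h4
      exact h4.symm
    apply hxy
    have h2 := congrArg Action.Hom.hom h1
    have h3 : ∀ z : V, z = 0 := by
      intro z
      calc z = (𝟙 (FDRep.of ρ) : FDRep.of ρ ⟶ FDRep.of ρ).hom z := rfl
      _ = (0 : FDRep.of ρ ⟶ FDRep.of ρ).hom z := by rw [h1]
      _ = 0 := rfl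
    rw [h3 x, h3 y]
  · intro hf
    have hmono : Mono ((Action.forget (FGModuleCat F) (MonCat.of G) ⋙
        forget₂ (FGModuleCat F) (ModuleCat F)).map f) := Functor.map_mono _ f
    have hinj : Function.Injective f.hom :=
      (ModuleCat.mono_iff_injective _).mp hmono
    have hrinv : ∀ g x, x ∈ LinearMap.range f.hom.hom.hom → ρ g x ∈ LinearMap.range f.hom.hom.hom := by
      intro g x hx
      obtain ⟨y, rfl⟩ := hx
      refine ⟨Y.ρ g y, ?_⟩
      have hcomm := f.comm g
      exact LinearMap.congr_fun (congrArg (fun φ => φ.hom.hom) hcomm) y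
    rcases hs (LinearMap.range f.hom.hom.hom) hrinv with hbot | htop
    · exact absurd (Action.Hom.ext (by
        rw [Action.zero_hom]
        exact FGModuleCat.hom_ext (LinearMap.range_eq_bot.mp hbot))) hf
    · have hsurj : Function.Surjective f.hom := LinearMap.range_eq_top.mp htop
      let e : Y.V ≃ₗ[F] V := LinearEquiv.ofBijective f.hom.hom.hom ⟨hinj, hsurj⟩
      have he : ∀ z, e z = f.hom z := fun z => rfl
      refine ⟨⟨⟨ConcreteCategory.ofHom (e.symm : V →ₗ[F] Y.V), ?_⟩, ?_, ?_⟩⟩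
      · intro g
        apply FGModuleCat.hom_ext
        apply LinearMap.ext
        intro x
        apply hinj
        show f.hom (e.symm ((FDRep.of ρ).ρ g x)) = f.hom (Y.ρ g (e.symm x))
        rw [show ∀ z, f.hom (e.symm z) = z from fun z => e.apply_symm_apply z]
        have hcomm := f.comm g
        have := LinearMap.congr_fun (congrArg (fun φ => φ.hom.hom) hcomm) (e.symm x)
        refine Eq.trans ?_ this.symm
        show (FDRep.of ρ).ρ g x = (FDRep.of ρ).ρ g (f.hom (e.symm x))
        rw [show f.hom (e.symm x) = x from e.apply_symm_apply x]
      · apply Action.Hom.ext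
        rw [Action.comp_hom]
        apply FGModuleCat.hom_ext
        apply LinearMap.ext
        intro y
        show e.symm (f.hom y) = y
        exact e.symm_apply_apply y
      · apply Action.Hom.ext
        rw [Action.comp_hom]
        apply FGModuleCat.hom_ext
        apply LinearMap.ext
        intro x
        show f.hom (e.symm x) = x
        exact e.apply_symm_apply x


theorem main [Fintype G] [NeZero (Fintype.card G : F)]
    (H K : Subgroup G)
    (hfix : ∀ W : FDRep F G, Simple W →
      Representation.invariants (W.ρ.comp H.subtype) =
        Representation.invariants (W.ρ.comp K.subtype)) :
    ∀ (n : ℕ) (V : Type) [AddCommGroup V] [Module F V] [FiniteDimensional F V]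
      (ρ : Representation F G V), Module.finrank F V ≤ n →
      ∀ v : V, (∀ h ∈ H, ρ h v = v) → ∀ k ∈ K, ρ k v = v := by
  intro n
  induction n with
  | zero =>
    intro V _ _ _ ρ hrank v hv k hk
    have hsub : Subsingleton V :=
      Module.finrank_zero_iff.mp (Nat.le_zero.mp hrank)
    exact Subsingleton.elim _ _
  | succ n IH =>
    intro V _ _ _ ρ hrank v hv k hk
    by_cases hall : ∀ q : Submodule F V, (∀ g x, x ∈ q → ρ g x ∈ q) → q = ⊥ ∨ q = ⊤
    · rcases subsingleton_or_nontrivial V with hV | hV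
      · exact Subsingleton.elim _ _
      · have hsimp := simple_of_subreps ρ hall
        have h1 := hfix (FDRep.of ρ) hsimp
        have hv' : v ∈ Representation.invariants ((FDRep.of ρ).ρ.comp H.subtype) := by
          rw [Representation.mem_invariants]
          intro h
          exact hv h h.2
        rw [h1, Representation.mem_invariants] at hv'
        exact hv' ⟨k, hk⟩
    · push_neg at hall
      obtain ⟨q, hqinv, hqbot, hqtop⟩ := hall
      haveI : NeZero (Nat.card G : F) := by rw [Nat.card_eq_fintype_card]; infer_instance
      obtain ⟨p', hcompl⟩ := MonoidAlgebra.Submodule.exists_isCompl (toMA ρ q hqinv)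
      have hq'inv := ofMA_inv ρ p'
      have hvtop : ρ.asModuleEquiv.symm v ∈ (toMA ρ q hqinv) ⊔ p' := by
        rw [hcompl.sup_eq_top]; trivial
      obtain ⟨x, hx, y, hy, hxy⟩ := Submodule.mem_sup.mp hvtop
      set x' : V := ρ.asModuleEquiv x with hx'def
      set y' : V := ρ.asModuleEquiv y with hy'def
      have hx' : x' ∈ q := hx
      have hy' : y' ∈ ofMA ρ p' := by
        rw [mem_ofMA]
        simpa [hy'def] using hy
      have hsum : x' + y' = v := by
        have := congrArg ρ.asModuleEquiv hxy
        rw [map_add] at this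
        simpa [hx'def, hy'def] using this
      -- invariance of the components
      have key : ∀ h : G, ρ h v = v → ρ h x' = x' ∧ ρ h y' = y' := by
        intro h hhv
        have hxq : ρ h x' ∈ q := hqinv h x' hx'
        have hyq : ρ h y' ∈ ofMA ρ p' := hq'inv h y' hy'
        have hsum2 : ρ h x' + ρ h y' = x' + y' := by
          rw [← map_add, hsum]; exact hhv
        have hdiff : ρ h x' - x' = y' - ρ h y' := by
          rw [sub_eq_sub_iff_add_eq_add, hsum2]
          exact add_comm x' y'
        have hz1 : ρ h x' - x' ∈ q := q.sub_mem hxq hx'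
        have hz2 : ρ h x' - x' ∈ ofMA ρ p' := by
          rw [hdiff]
          exact (ofMA ρ p').sub_mem hy' hyq
        have hzero : ρ h x' - x' = 0 := by
          have hdis := hcompl.disjoint
          rw [Submodule.disjoint_def] at hdis
          have hm1 : ρ.asModuleEquiv.symm (ρ h x' - x') ∈ toMA ρ q hqinv := by
            rw [mem_toMA, ρ.asModuleEquiv.apply_symm_apply]
            exact hz1
          have hm2 : ρ.asModuleEquiv.symm (ρ h x' - x') ∈ p' := hz2
          have h0 := hdis _ hm1 hm2
          have h0' := congrArg ρ.asModuleEquiv h0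
          rw [map_zero] at h0'
          rwa [ρ.asModuleEquiv.apply_symm_apply] at h0'
        have h1 : ρ h x' = x' := by
          have := sub_eq_zero.mp hzero
          exact this
        refine ⟨h1, ?_⟩
        have : ρ h y' = y' := by
          have := hsum2
          rw [h1] at this
          exact add_left_cancel this
        exact this
      -- q and q' are proper, so have smaller rank
      have hq'top : ofMA ρ p' ≠ ⊤ := by
        intro htop
        apply hqbot
        have hp'top : p' = ⊤ := by
          rw [eq_top_iff]
          intro z _
          have : ρ.asModuleEquiv z ∈ ofMA ρ p' := htop ▸ Submodule.mem_top
          rw [mem_ofMA] at this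
          simpa using this
        have hdis := hcompl.disjoint
        rw [hp'top, disjoint_top] at hdis
        rw [eq_bot_iff]
        intro z hz
        have : ρ.asModuleEquiv.symm z ∈ toMA ρ q hqinv := by
          rw [mem_toMA]; simpa using hz
        have hz0 : ρ.asModuleEquiv.symm z = 0 := by
          rw [hdis] at this
          simpa using this
        have h0' := congrArg ρ.asModuleEquiv hz0
        rw [map_zero] at h0'
        simpa using h0'
      have hr1 : Module.finrank F q ≤ n :=
        Nat.lt_succ_iff.mp (lt_of_lt_of_le (Submodule.finrank_lt hqtop) hrank)
      have hr2 : Module.finrank F (ofMA ρ p') ≤ n :=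
        Nat.lt_succ_iff.mp (lt_of_lt_of_le (Submodule.finrank_lt hq'top) hrank)
      -- apply the induction hypothesis to both components
      have hres1 : ρ k x' = x' := by
        have := IH q (subRep ρ q hqinv) hr1 ⟨x', hx'⟩
          (fun h hh => Subtype.ext (by
            rw [subRep_apply]
            exact (key h (hv h hh)).1)) k hk
        have := congrArg (Subtype.val) this
        rwa [subRep_apply] at this
      have hres2 : ρ k y' = y' := by
        have := IH (ofMA ρ p') (subRep ρ (ofMA ρ p') hq'inv) hr2 ⟨y', hy'⟩
          (fun h hh => Subtype.ext (by
            rw [subRep_apply]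
            exact (key h (hv h hh)).2)) k hk
        have := congrArg (Subtype.val) this
        rwa [subRep_apply] at this
      rw [← hsum, map_add, hres1, hres2]

end Stmt13Aux



/-- Let `G` be a finite group, `𝔽` a field of characteristic not dividing `|G|`, and
`H ≤ K ≤ G` subgroups. If for every irreducible `𝔽`-representation `W` of `G` the `H`-fixed
subspace equals the `K`-fixed subspace, then `H = K`. -/
theorem stmt_13 {F G : Type} [Field F] [Group G] [Fintype G]
    (hchar : ¬ (ringChar F ∣ Fintype.card G))
    (H K : Subgroup G) (hHK : H ≤ K)
    (hfix : ∀ W : FDRep F G, Simple W →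
      Representation.invariants (W.ρ.comp H.subtype) =
        Representation.invariants (W.ρ.comp K.subtype)) :
    H = K := by
  haveI hcard : NeZero ((Fintype.card G : F)) := by
    constructor
    intro h0
    exact hchar ((CharP.cast_eq_zero_iff F (ringChar F) _).mp h0)
  refine le_antisymm hHK ?_
  intro k hk
  haveI : Fintype (G ⧸ H) := Fintype.ofFinite _
  haveI : FiniteDimensional F (MonoidAlgebra F (G ⧸ H)) :=
    Module.Finite.equiv ((Finsupp.linearEquivFunOnFinite F F (G ⧸ H)).symm.trans
      (MonoidAlgebra.coeffLinearEquiv F).symm)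
  set ρ := Representation.ofMulAction F G (G ⧸ H) with hρ
  have hone : ∀ h : G, h ∈ H → (h • ((1 : G) : G ⧸ H)) = ((1 : G) : G ⧸ H) := by
    intro h hh
    rw [MulAction.Quotient.smul_mk]
    exact QuotientGroup.eq.mpr (by simpa using H.inv_mem hh)
  have hkv := Stmt13Aux.main H K hfix (Module.finrank F (MonoidAlgebra F (G ⧸ H)))
      (MonoidAlgebra F (G ⧸ H)) ρ le_rfl (MonoidAlgebra.single ((1 : G) : G ⧸ H) 1)
      (by
        intro h hh
        rw [hρ, Representation.ofMulAction_single, hone h hh]) k hk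
  rw [hρ, Representation.ofMulAction_single] at hkv
  have hks : (k • ((1 : G) : G ⧸ H)) = ((1 : G) : G ⧸ H) := by
    by_contra hne
    exact hne ((MonoidAlgebra.single_left_inj one_ne_zero).mp hkv)
  rw [MulAction.Quotient.smul_mk] at hks
  have := QuotientGroup.eq.mp hks
  simpa using this
end
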